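/- arXiv:2003.00248 — 2 statements merged into one kernel-verified Lean document; each statement's English description precedes it below -/
import Mathlib

section
/- (Proposition 1) Let λ ≥ 0, δ ∈ (0,1), and let Σ* be positive definite. Let θ̂ be a random vector on a probability space such that Prob(θ̂ − θ* ∈ λU_{Σ*}) ≥ 1 − δ. Let x̂ : ℝ^d → 𝒳 be a map such that, for every θ, x̂(θ) is an optimal solution of the robust optimization problem with scale λ, center θ and shape Σ*, and such that f*(x̂(θ̂)) is a measurable extended-real random variable. Let x*(2λ) be an optimal solution of the robust optimization problem with scale 2λ, center θ* and shape Σ*. Then VaR_δ[f*(x̂(θ̂))] ≤ f*(x*(2λ)), where VaR_δ[Z] := inf{η ∈ ℝ : Prob(Z ≤ η) ≥ 1 − δ}. -/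
open MeasureTheory ProbabilityTheory Matrix
open scoped ENNReal Pointwise

/-- The ellipsoid `U_Σ = {u : uᵀ Σ⁻¹ u ≤ 1}`. -/
def USet {d : ℕ} (Sg : Matrix (Fin d) (Fin d) ℝ) : Set (Fin d → ℝ) :=
  {u | u ⬝ᵥ (Sg⁻¹ *ᵥ u) ≤ 1}

/-- `r_k(x; Σ) = max_{u ∈ U_Σ} g_k(x, u)` where `g_k(x, θ) = θᵀ v_k(x)`. -/
noncomputable def rk {d m K : ℕ} (v : Fin K → (Fin m → ℝ) → (Fin d → ℝ))
    (k : Fin K) (x : Fin m → ℝ) (Sg : Matrix (Fin d) (Fin d) ℝ) : ℝ :=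
  sSup ((fun u => u ⬝ᵥ v k x) '' USet Sg)

/-- `S(λ, Y; Σ)`, the set of parameter errors that are uniformly small over `Y`. -/
noncomputable def SErr {d m K : ℕ} (v : Fin K → (Fin m → ℝ) → (Fin d → ℝ))
    (lam : ℝ) (Y : Set (Fin m → ℝ)) (Sg : Matrix (Fin d) (Fin d) ℝ) : Set (Fin d → ℝ) :=
  {Δ | ∀ k, ∀ y ∈ Y, |Δ ⬝ᵥ v k y| ≤ lam * rk v k y Sg}

/-- Feasibility for the robust optimization problem with scale `lam`, center `θ`, shape `Σ`. -/
def Feasible {d m K : ℕ} (X : Set (Fin m → ℝ)) (v : Fin K → (Fin m → ℝ) → (Fin d → ℝ))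
    (lam : ℝ) (θ : Fin d → ℝ) (Sg : Matrix (Fin d) (Fin d) ℝ) (x : Fin m → ℝ) : Prop :=
  x ∈ X ∧ ∀ k, ∀ u ∈ USet Sg, 0 ≤ (θ + lam • u) ⬝ᵥ v k x

/-- Optimal solution of the robust optimization problem. -/
def IsOptimal {d m K : ℕ} (X : Set (Fin m → ℝ)) (f : (Fin m → ℝ) → ℝ)
    (v : Fin K → (Fin m → ℝ) → (Fin d → ℝ))
    (lam : ℝ) (θ : Fin d → ℝ) (Sg : Matrix (Fin d) (Fin d) ℝ) (x : Fin m → ℝ) : Prop :=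
  Feasible X v lam θ Sg x ∧ ∀ y, Feasible X v lam θ Sg y → f x ≤ f y

open Classical in
/-- The true objective `f*`, which is `∞` when a true constraint is violated. -/
noncomputable def fStar {d m K : ℕ} (f : (Fin m → ℝ) → ℝ)
    (v : Fin K → (Fin m → ℝ) → (Fin d → ℝ)) (θs : Fin d → ℝ) (x : Fin m → ℝ) : EReal :=
  if ∀ k, 0 ≤ θs ⬝ᵥ v k x then (f x : EReal) else ⊤

/-- The standard Gaussian measure on `ℝ^d`. -/
noncomputable def stdGaussian (d : ℕ) : Measure (Fin d → ℝ) :=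
  Measure.pi fun _ => gaussianReal 0 1

open Classical in
/-- The positive semidefinite square root (junk value `0` off the psd cone). -/
noncomputable def matSqrt {d : ℕ} (A : Matrix (Fin d) (Fin d) ℝ) : Matrix (Fin d) (Fin d) ℝ :=
  if h : A.PosSemidef then
    (h.1.eigenvectorUnitary : Matrix (Fin d) (Fin d) ℝ) *
      diagonal ((↑) ∘ (√·) ∘ h.1.eigenvalues) *
      (star h.1.eigenvectorUnitary : Matrix (Fin d) (Fin d) ℝ)
  else 0

/-- The centered Gaussian measure on `ℝ^d` with covariance `A`. -/
noncomputable def gaussOf {d : ℕ} (A : Matrix (Fin d) (Fin d) ℝ) : Measure (Fin d → ℝ) :=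
  (stdGaussian d).map (fun z => matSqrt A *ᵥ z)

/-- The Euclidean norm on `Fin d → ℝ`. -/
noncomputable def euclNorm {d : ℕ} (z : Fin d → ℝ) : ℝ := Real.sqrt (∑ i, z i ^ 2)

/-- Quantile function of the chi distribution with `d` degrees of freedom. -/
noncomputable def chiQuantile (d : ℕ) (p : ℝ) : ℝ :=
  sInf {t : ℝ | 0 ≤ t ∧ p ≤ (stdGaussian d {z | euclNorm z ≤ t}).toReal}

/-- The minimum spatial uniform bound `μ(p, Y; P, Σ)` (`⊤` when infeasible, `0` for `p ≤ 0`). -/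
noncomputable def muB {d m K : ℕ} (v : Fin K → (Fin m → ℝ) → (Fin d → ℝ)) (p : ℝ)
    (Y : Set (Fin m → ℝ)) (P : Measure (Fin d → ℝ)) (Sg : Matrix (Fin d) (Fin d) ℝ) : ℝ≥0∞ :=
  ⨅ (μ : ℝ) (_ : 0 ≤ μ ∧ ENNReal.ofReal p ≤ P (SErr v μ Y Sg)), ENNReal.ofReal μ

/-- The value-at-risk `VaR_δ[Z] = inf {η ∈ ℝ : Prob(Z ≤ η) ≥ 1 − δ}` (as an extended real,
`⊤` when no such `η` exists). -/
noncomputable def VaR {Ω : Type*} [MeasurableSpace Ω] (δ : ℝ) (P : Measure Ω)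
    (Z : Ω → EReal) : EReal :=
  sInf ((fun η : ℝ => (η : EReal)) ''
    {η : ℝ | ENNReal.ofReal (1 - δ) ≤ P {ω | Z ω ≤ (η : EReal)}})

/-- Proposition 1. -/
theorem stmt2 {d m K : ℕ} (hd : 1 ≤ d) (hm : 1 ≤ m) (hK : 1 ≤ K)
    {Ω : Type*} [MeasurableSpace Ω] (P : Measure Ω) [IsProbabilityMeasure P]
    (θstar : Fin d → ℝ) (v : Fin K → (Fin m → ℝ) → (Fin d → ℝ))
    (X : Set (Fin m → ℝ)) (f : (Fin m → ℝ) → ℝ)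
    (lam : ℝ) (hlam : 0 ≤ lam) (δ : ℝ) (hδ0 : 0 < δ) (hδ1 : δ < 1)
    (Sgstar : Matrix (Fin d) (Fin d) ℝ) (hSg : Sgstar.PosDef)
    (θhat : Ω → Fin d → ℝ)
    (hprob : ENNReal.ofReal (1 - δ) ≤ P {ω | θhat ω - θstar ∈ lam • USet Sgstar})
    (xhat : (Fin d → ℝ) → (Fin m → ℝ))
    (hopt : ∀ θ, IsOptimal X f v lam θ Sgstar (xhat θ))
    (hmeas : Measurable (fun ω => fStar f v θstar (xhat (θhat ω))))
    (x2 : Fin m → ℝ) (hx2 : IsOptimal X f v (2 * lam) θstar Sgstar x2) :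
    VaR δ P (fun ω => fStar f v θstar (xhat (θhat ω))) ≤ fStar f v θstar x2 := by
  
  classical
  -- Basic facts about the ellipsoid
  have hBpsd : (Sgstar⁻¹).PosSemidef := hSg.inv.posSemidef
  have hQnn : ∀ x : Fin d → ℝ, 0 ≤ x ⬝ᵥ (Sgstar⁻¹ *ᵥ x) := by
    intro x
    have := hBpsd.re_dotProduct_nonneg x
    simpa using this
  have hUneg : ∀ u ∈ USet Sgstar, -u ∈ USet Sgstar := by
    intro u hu
    simpa [USet, Matrix.mulVec_neg] using hu
  have hU0 : (0 : Fin d → ℝ) ∈ USet Sgstar := by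
    simp [USet]
  have hUmid : ∀ a ∈ USet Sgstar, ∀ b ∈ USet Sgstar,
      (1/2 : ℝ) • (a + b) ∈ USet Sgstar := by
    intro a ha b hb
    have key : (a + b) ⬝ᵥ (Sgstar⁻¹ *ᵥ (a + b))
        = 2 * (a ⬝ᵥ (Sgstar⁻¹ *ᵥ a)) + 2 * (b ⬝ᵥ (Sgstar⁻¹ *ᵥ b))
          - (a - b) ⬝ᵥ (Sgstar⁻¹ *ᵥ (a - b)) := by
      simp only [Matrix.mulVec_add, Matrix.mulVec_sub, add_dotProduct,
        sub_dotProduct, dotProduct_add, dotProduct_sub]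
      ring
    have hab : (a + b) ⬝ᵥ (Sgstar⁻¹ *ᵥ (a + b)) ≤ 4 := by
      have h1 := hQnn (a - b)
      have ha' : a ⬝ᵥ (Sgstar⁻¹ *ᵥ a) ≤ 1 := ha
      have hb' : b ⬝ᵥ (Sgstar⁻¹ *ᵥ b) ≤ 1 := hb
      nlinarith
    show ((1/2 : ℝ) • (a + b)) ⬝ᵥ (Sgstar⁻¹ *ᵥ ((1/2 : ℝ) • (a + b))) ≤ 1
    rw [Matrix.mulVec_smul, smul_dotProduct, dotProduct_smul]
    simp only [smul_eq_mul]
    nlinarith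
  -- x2 is truly feasible, so fStar x2 = f x2
  have hx2true : ∀ k, 0 ≤ θstar ⬝ᵥ v k x2 := by
    intro k
    have := hx2.1.2 k 0 hU0
    simpa using this
  have hfx2 : fStar f v θstar x2 = (f x2 : EReal) := by
    simp only [fStar]
    rw [if_pos hx2true]
  -- main pointwise claim
  have hmain : ∀ θ : Fin d → ℝ, θ - θstar ∈ lam • USet Sgstar →
      fStar f v θstar (xhat θ) ≤ (f x2 : EReal) := by
    intro θ hθ
    obtain ⟨u₀, hu₀, hθeq⟩ := hθ
    have hθ' : θ = θstar + lam • u₀ := by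
      have : θ - θstar = lam • u₀ := hθeq.symm
      rw [← this]; abel
    -- x2 is feasible for the problem with center θ and scale lam
    have hfeas2 : Feasible X v lam θ Sgstar x2 := by
      refine ⟨hx2.1.1, fun k u hu => ?_⟩
      have hmem := hUmid u₀ hu₀ u hu
      have h := hx2.1.2 k _ hmem
      have heq : θstar + (2 * lam) • ((1/2 : ℝ) • (u₀ + u)) = θ + lam • u := by
        rw [hθ']
        funext i
        simp only [Pi.add_apply, Pi.smul_apply, smul_eq_mul]
        ring
      rwa [heq] at h
    have hle : f (xhat θ) ≤ f x2 := (hopt θ).2 x2 hfeas2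
    -- xhat θ satisfies the true constraints
    have htrue : ∀ k, 0 ≤ θstar ⬝ᵥ v k (xhat θ) := by
      intro k
      have h := (hopt θ).1.2 k (-u₀) (hUneg u₀ hu₀)
      have heq : θ + lam • (-u₀) = θstar := by
        rw [hθ']
        funext i
        simp only [Pi.add_apply, Pi.smul_apply, Pi.neg_apply, smul_eq_mul]
        ring
      rwa [heq] at h
    simp only [fStar]
    rw [if_pos htrue]
    exact_mod_cast hle
  -- conclude via VaR
  have hsub : {ω | θhat ω - θstar ∈ lam • USet Sgstar}
      ⊆ {ω | fStar f v θstar (xhat (θhat ω)) ≤ ((f x2 : ℝ) : EReal)} := by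
    intro ω hω
    exact hmain (θhat ω) hω
  have hP : ENNReal.ofReal (1 - δ)
      ≤ P {ω | fStar f v θstar (xhat (θhat ω)) ≤ ((f x2 : ℝ) : EReal)} :=
    le_trans hprob (measure_mono hsub)
  rw [hfx2]
  exact sInf_le (Set.mem_image_of_mem _ hP)
end

section
/- (Lemma 9) Let μ ≥ 0 and κ ≥ 1, let θ ∈ ℝ^d, let Σ be positive definite, and let Y ⊆ ℝ^m. Suppose θ − θ* ∈ S(μ, Y; Σ), and suppose x₁, x₂, x₃ are optimal solutions of the robust optimization problems with shape Σ and with (scale, center) equal to ((κ−1)μ, θ*), (κμ, θ), and ((κ+1)μ, θ*) respectively, with x₁, x₂, x₃ ∈ Y. Then f*(x₁) ≤ f*(x₂) ≤ f*(x₃). -/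
open MeasureTheory ProbabilityTheory Matrix
open scoped ENNReal Pointwise

section HELP
open Matrix

-- [CS lemma pasted here]

lemma dot_le_of_mem {d : ℕ} {Sg : Matrix (Fin d) (Fin d) ℝ} (hSg : Sg.PosDef)
    (w : Fin d → ℝ) {a : Fin d → ℝ} (ha : a ⬝ᵥ (Sg⁻¹ *ᵥ a) ≤ 1) :
    a ⬝ᵥ w ≤ Real.sqrt (w ⬝ᵥ (Sg *ᵥ w)) := by
  have hMpd : (Sg⁻¹).PosDef := hSg.inv
  have hnn : ∀ x : Fin d → ℝ, 0 ≤ x ⬝ᵥ (Sg⁻¹ *ᵥ x) := by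
    intro x
    by_cases hx : x = 0
    · simp [hx]
    · simpa using (hMpd.dotProduct_mulVec_pos hx).le
  have hMsymm : (Sg⁻¹)ᵀ = Sg⁻¹ := hMpd.isHermitian.eq
  set b := Sg *ᵥ w with hb
  have hMb : Sg⁻¹ *ᵥ b = w := by
    rw [hb, mulVec_mulVec, Matrix.nonsing_inv_mul _ hSg.det_pos.ne'.isUnit, one_mulVec]
  have hsym : ∀ x y : Fin d → ℝ, x ⬝ᵥ (Sg⁻¹ *ᵥ y) = y ⬝ᵥ (Sg⁻¹ *ᵥ x) := by
    intro x y
    rw [dotProduct_mulVec, ← mulVec_transpose, hMsymm, dotProduct_comm]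
  have hC : b ⬝ᵥ (Sg⁻¹ *ᵥ b) = w ⬝ᵥ (Sg *ᵥ w) := by rw [hMb, dotProduct_comm, hb]
  have hA0 : 0 ≤ a ⬝ᵥ (Sg⁻¹ *ᵥ a) := hnn a
  have hC0 : 0 ≤ w ⬝ᵥ (Sg *ᵥ w) := hC ▸ hnn b
  have hBsq : (a ⬝ᵥ w) ^ 2 ≤ w ⬝ᵥ (Sg *ᵥ w) := by
    rcases eq_or_lt_of_le hC0 with h0 | h0
    · have hb0 : b = 0 := by
        by_contra hbne
        have := hMpd.dotProduct_mulVec_pos hbne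
        simp only [star_trivial] at this
        rw [hC] at this
        exact absurd h0.symm this.ne'
      have hw0 : w = 0 := by rw [← hMb, hb0, mulVec_zero]
      simp [hw0]
    · have key : ∀ t : ℝ, 0 ≤ a ⬝ᵥ (Sg⁻¹ *ᵥ a) + 2 * t * (a ⬝ᵥ w) + t ^ 2 * (w ⬝ᵥ (Sg *ᵥ w)) := by
        intro t
        have h1 := hnn (a + t • b)
        have expand : (a + t • b) ⬝ᵥ (Sg⁻¹ *ᵥ (a + t • b))
            = a ⬝ᵥ (Sg⁻¹ *ᵥ a) + 2 * t * (a ⬝ᵥ w) + t ^ 2 * (w ⬝ᵥ (Sg *ᵥ w)) := by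
          rw [mulVec_add, mulVec_smul, add_dotProduct, smul_dotProduct, dotProduct_add,
            dotProduct_smul, dotProduct_add, dotProduct_smul, hsym b a, hMb, (dotProduct_comm b w : b ⬝ᵥ w = _), ← hb]
          simp only [smul_eq_mul]
          ring
        linarith [expand ▸ h1]
      have hkey := key (-(a ⬝ᵥ w) / (w ⬝ᵥ (Sg *ᵥ w)))
      have h2 : 0 ≤ a ⬝ᵥ (Sg⁻¹ *ᵥ a) - (a ⬝ᵥ w) ^ 2 / (w ⬝ᵥ (Sg *ᵥ w)) := by
        have : 2 * (-(a ⬝ᵥ w) / (w ⬝ᵥ (Sg *ᵥ w))) * (a ⬝ᵥ w)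
            + (-(a ⬝ᵥ w) / (w ⬝ᵥ (Sg *ᵥ w))) ^ 2 * (w ⬝ᵥ (Sg *ᵥ w))
            = -((a ⬝ᵥ w) ^ 2 / (w ⬝ᵥ (Sg *ᵥ w))) := by
          field_simp
          ring
        linarith [hkey, this]
      have := (div_le_iff₀ h0).mp (by linarith : (a ⬝ᵥ w) ^ 2 / (w ⬝ᵥ (Sg *ᵥ w)) ≤ a ⬝ᵥ (Sg⁻¹ *ᵥ a))
      nlinarith
  calc a ⬝ᵥ w ≤ |a ⬝ᵥ w| := le_abs_self _
    _ = Real.sqrt ((a ⬝ᵥ w) ^ 2) := (Real.sqrt_sq_eq_abs _).symm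
    _ ≤ Real.sqrt (w ⬝ᵥ (Sg *ᵥ w)) := Real.sqrt_le_sqrt hBsq


lemma zero_mem_USet {d : ℕ} (Sg : Matrix (Fin d) (Fin d) ℝ) : (0 : Fin d → ℝ) ∈ USet Sg := by
  simp [USet]

lemma neg_mem_USet {d : ℕ} {Sg : Matrix (Fin d) (Fin d) ℝ} {u : Fin d → ℝ}
    (h : u ∈ USet Sg) : -u ∈ USet Sg := by
  simpa [USet, mulVec_neg] using h

lemma le_rk' {d m K : ℕ} {Sg : Matrix (Fin d) (Fin d) ℝ} (hSg : Sg.PosDef)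
    (v : Fin K → (Fin m → ℝ) → (Fin d → ℝ)) (k : Fin K) (x : Fin m → ℝ)
    {u : Fin d → ℝ} (hu : u ∈ USet Sg) : u ⬝ᵥ v k x ≤ rk v k x Sg := by
  refine le_csSup ⟨Real.sqrt (v k x ⬝ᵥ (Sg *ᵥ v k x)), ?_⟩ (Set.mem_image_of_mem _ hu)
  rintro _ ⟨a, ha, rfl⟩
  exact dot_le_of_mem hSg _ ha

lemma rk_nonneg {d m K : ℕ} {Sg : Matrix (Fin d) (Fin d) ℝ} (hSg : Sg.PosDef)
    (v : Fin K → (Fin m → ℝ) → (Fin d → ℝ)) (k : Fin K) (x : Fin m → ℝ) :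
    0 ≤ rk v k x Sg := by
  simpa using le_rk' hSg v k x (zero_mem_USet Sg)

lemma scale_rk_le {d m K : ℕ} {Sg : Matrix (Fin d) (Fin d) ℝ}
    (v : Fin K → (Fin m → ℝ) → (Fin d → ℝ)) (k : Fin K) (x : Fin m → ℝ)
    {c : ℝ} (hc : 0 ≤ c) (θ : Fin d → ℝ)
    (h : ∀ u ∈ USet Sg, 0 ≤ (θ + c • u) ⬝ᵥ v k x) :
    c * rk v k x Sg ≤ θ ⬝ᵥ v k x := by
  have h0 : 0 ≤ θ ⬝ᵥ v k x := by simpa using h 0 (zero_mem_USet Sg)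
  rcases eq_or_lt_of_le hc with rfl | hc0
  · simpa using h0
  · have hsup : rk v k x Sg ≤ θ ⬝ᵥ v k x / c := by
      refine csSup_le ⟨_, Set.mem_image_of_mem _ (zero_mem_USet Sg)⟩ ?_
      rintro _ ⟨u, hu, rfl⟩
      rw [le_div_iff₀ hc0]
      have := h (-u) (neg_mem_USet hu)
      rw [add_dotProduct, smul_dotProduct, neg_dotProduct, smul_eq_mul] at this
      linarith
    calc c * rk v k x Sg ≤ c * (θ ⬝ᵥ v k x / c) := by
          exact mul_le_mul_of_nonneg_left hsup hc
      _ = θ ⬝ᵥ v k x := by field_simp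
end HELP

/-- Lemma 9: with `θ − θ* ∈ S(μ, Y; Σ)` and optimal solutions `x₁, x₂, x₃`
for scales `(κ−1)μ, κμ, (κ+1)μ` and centers `θ*, θ, θ*` all lying in `Y`,
one has `f*(x₁) ≤ f*(x₂) ≤ f*(x₃)`. -/
theorem stmt4 {d m K : ℕ} (hd : 1 ≤ d) (hm : 1 ≤ m) (hK : 1 ≤ K)
    (θstar : Fin d → ℝ) (v : Fin K → (Fin m → ℝ) → (Fin d → ℝ))
    (X : Set (Fin m → ℝ)) (f : (Fin m → ℝ) → ℝ)
    (μ : ℝ) (hμ : 0 ≤ μ) (κ : ℝ) (hκ : 1 ≤ κ) (θ : Fin d → ℝ)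
    (Sg : Matrix (Fin d) (Fin d) ℝ) (hSg : Sg.PosDef)
    (Y : Set (Fin m → ℝ))
    (hθ : θ - θstar ∈ SErr v μ Y Sg)
    (x₁ x₂ x₃ : Fin m → ℝ)
    (h1 : IsOptimal X f v ((κ - 1) * μ) θstar Sg x₁)
    (h2 : IsOptimal X f v (κ * μ) θ Sg x₂)
    (h3 : IsOptimal X f v ((κ + 1) * μ) θstar Sg x₃)
    (hx₁Y : x₁ ∈ Y) (hx₂Y : x₂ ∈ Y) (hx₃Y : x₃ ∈ Y) :
    fStar f v θstar x₁ ≤ fStar f v θstar x₂ ∧ fStar f v θstar x₂ ≤ fStar f v θstar x₃ := by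

  -- abbreviations
  have hκμ : 0 ≤ κ * μ := mul_nonneg (by linarith) hμ
  have hκ1μ : 0 ≤ (κ - 1) * μ := mul_nonneg (by linarith) hμ
  have hκp1μ : 0 ≤ (κ + 1) * μ := mul_nonneg (by linarith) hμ
  -- true feasibility of x₁ and x₃
  have ht1 : ∀ k, 0 ≤ θstar ⬝ᵥ v k x₁ := fun k => by
    simpa using h1.1.2 k 0 (zero_mem_USet Sg)
  have ht3 : ∀ k, 0 ≤ θstar ⬝ᵥ v k x₃ := fun k => by
    simpa using h3.1.2 k 0 (zero_mem_USet Sg)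
  -- key scale bounds
  have hr2 : ∀ k, κ * μ * rk v k x₂ Sg ≤ θ ⬝ᵥ v k x₂ := fun k =>
    scale_rk_le v k x₂ hκμ θ (h2.1.2 k)
  have hr3 : ∀ k, (κ + 1) * μ * rk v k x₃ Sg ≤ θstar ⬝ᵥ v k x₃ := fun k =>
    scale_rk_le v k x₃ hκp1μ θstar (h3.1.2 k)
  -- error bounds
  have herr2 : ∀ k, |θ ⬝ᵥ v k x₂ - θstar ⬝ᵥ v k x₂| ≤ μ * rk v k x₂ Sg := fun k => by
    simpa [sub_dotProduct] using hθ k x₂ hx₂Y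
  have herr3 : ∀ k, |θ ⬝ᵥ v k x₃ - θstar ⬝ᵥ v k x₃| ≤ μ * rk v k x₃ Sg := fun k => by
    simpa [sub_dotProduct] using hθ k x₃ hx₃Y
  -- θ* lower bound at x₂ : θ*⬝v ≥ (κ-1)μ r
  have hstar2 : ∀ k, (κ - 1) * μ * rk v k x₂ Sg ≤ θstar ⬝ᵥ v k x₂ := by
    intro k
    have habs := (abs_le.mp (herr2 k)).2
    have := hr2 k
    nlinarith [rk_nonneg hSg v k x₂]
  -- true feasibility of x₂
  have ht2 : ∀ k, 0 ≤ θstar ⬝ᵥ v k x₂ := fun k =>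
    le_trans (mul_nonneg hκ1μ (rk_nonneg hSg v k x₂)) (hstar2 k)
  -- x₂ is feasible for problem 1
  have hfeas21 : Feasible X v ((κ - 1) * μ) θstar Sg x₂ := by
    refine ⟨h2.1.1, fun k u hu => ?_⟩
    have hur : -(u ⬝ᵥ v k x₂) ≤ rk v k x₂ Sg := by
      simpa [neg_dotProduct] using le_rk' hSg v k x₂ (neg_mem_USet hu)
    have := hstar2 k
    rw [add_dotProduct, smul_dotProduct, smul_eq_mul]
    nlinarith
  -- x₃ is feasible for problem 2
  have hfeas32 : Feasible X v (κ * μ) θ Sg x₃ := by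
    refine ⟨h3.1.1, fun k u hu => ?_⟩
    have hur : -(u ⬝ᵥ v k x₃) ≤ rk v k x₃ Sg := by
      simpa [neg_dotProduct] using le_rk' hSg v k x₃ (neg_mem_USet hu)
    have h3k := hr3 k
    have habs := (abs_le.mp (herr3 k)).1
    rw [add_dotProduct, smul_dotProduct, smul_eq_mul]
    nlinarith
  have hf12 : f x₁ ≤ f x₂ := h1.2 x₂ hfeas21
  have hf23 : f x₂ ≤ f x₃ := h2.2 x₃ hfeas32
  constructor
  · rw [fStar, fStar, if_pos ht1, if_pos ht2]
    exact_mod_cast hf12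
  · rw [fStar, fStar, if_pos ht2, if_pos ht3]
    exact_mod_cast hf23
end
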